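/- Let F_q be a finite field and V a finite-dimensional F_q-vector space. Let (W_1, W_2) and (W_1', W_2') be two pairs of k-dimensional subspaces of V such that dim(W_1 ∩ W_2) = dim(W_1' ∩ W_2') = l. Then the number of simple linear maps T : W_1 → V with image T(W_1) = W_2 equals the number of simple linear maps T : W_1' → V with image T(W_1') = W_2'. -/

import Mathlib

/-- A linear map `T : W → V` defined on a subspace `W` of `V` is *simple* if the only
`T`-invariant subspace properly contained in `V` is the zero subspace. A subspace `U` of `V`
is `T`-invariant if `U ⊆ W` and `T(U) ⊆ U`. -/
def IsSimple {F V : Type*} [Field F] [AddCommGroup V] [Module F V]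
    (W : Submodule F V) (T : W →ₗ[F] V) : Prop :=
  ∀ U : Submodule F V, U ≤ W → (∀ x : W, (x : V) ∈ U → T x ∈ U) → U ≠ ⊤ → U = ⊥

open Submodule Set Module Function

section Aux

variable {F V : Type*} [Field F] [AddCommGroup V] [Module F V]

private lemma exists_enum (P : Set V) (m : ℕ) (hP : P.Finite) (hcard : P.ncard = m) :
    ∃ v : Fin m → V, Function.Injective v ∧ Set.range v = P := by
  have : Fintype P := hP.fintype
  have hc : Fintype.card P = m := by
    rw [← Nat.card_eq_fintype_card, Nat.card_coe_set_eq, hcard]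
  let e := Fintype.equivFinOfCardEq hc
  refine ⟨fun i => ((e.symm i : P) : V), Subtype.val_injective.comp e.symm.injective, ?_⟩
  have : Set.range (fun i => ((e.symm i : P) : V)) = Subtype.val '' Set.range e.symm :=
    Set.range_comp _ _
  rw [this, Equiv.range_eq_univ, Set.image_univ, Subtype.range_coe]

private lemma ncard_li [FiniteDimensional F V] {s : Set V}
    (hs : LinearIndependent F (fun x : s => (x : V))) :
    s.ncard = finrank F (span F s) := by
  have hf : s.Finite := hs.setFinite
  have : Fintype s := hf.fintype
  rw [finrank_span_set_eq_card hs, Set.ncard_eq_toFinset_card']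

private lemma exists_adapted_basis [FiniteDimensional F V] (k l : ℕ) (W₁ W₂ : Submodule F V)
    (h1 : finrank F W₁ = k) (h2 : finrank F W₂ = k) (hl : finrank F ↥(W₁ ⊓ W₂) = l) :
    ∃ b : Basis ((Fin l ⊕ Fin (k - l)) ⊕ (Fin (k - l) ⊕ Fin (finrank F V - (2 * k - l)))) F V,
      span F (Set.range (fun p : Fin l ⊕ Fin (k - l) => b (Sum.inl p))) = W₁ ∧
      span F (Set.range (Sum.elim (fun i : Fin l => b (Sum.inl (Sum.inl i)))
        (fun j : Fin (k - l) => b (Sum.inr (Sum.inl j))))) = W₂ := by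
  classical
  obtain ⟨b₀, hb₀sub, hb₀span, hb₀li⟩ :=
    exists_linearIndependent F ((W₁ ⊓ W₂ : Submodule F V) : Set V)
  rw [Submodule.span_eq] at hb₀span
  have hb₀li' : LinearIndepOn F id b₀ := hb₀li
  have hb₀W₁ : b₀ ⊆ (W₁ : Set V) := fun z hz => (hb₀sub hz).1
  have hb₀W₂ : b₀ ⊆ (W₂ : Set V) := fun z hz => (hb₀sub hz).2
  -- extend b₀ to a "basis set" of W₁
  have hb₀b₁ : b₀ ⊆ hb₀li'.extend hb₀W₁ := hb₀li'.subset_extend _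
  have hb₁W₁ : hb₀li'.extend hb₀W₁ ⊆ (W₁ : Set V) := hb₀li'.extend_subset _
  have hb₁li : LinearIndependent F (fun x : ↥(hb₀li'.extend hb₀W₁) => (x : V)) :=
    hb₀li'.linearIndepOn_extend hb₀W₁
  have hb₁span : span F (hb₀li'.extend hb₀W₁) = W₁ := by
    rw [hb₀li'.span_extend_eq_span hb₀W₁, Submodule.span_eq]
  set b₁ := hb₀li'.extend hb₀W₁ with hb₁def
  -- extend b₀ to a "basis set" of W₂
  have hb₀b₂ : b₀ ⊆ hb₀li'.extend hb₀W₂ := hb₀li'.subset_extend _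
  have hb₂W₂ : hb₀li'.extend hb₀W₂ ⊆ (W₂ : Set V) := hb₀li'.extend_subset _
  have hb₂li : LinearIndependent F (fun x : ↥(hb₀li'.extend hb₀W₂) => (x : V)) :=
    hb₀li'.linearIndepOn_extend hb₀W₂
  have hb₂span : span F (hb₀li'.extend hb₀W₂) = W₂ := by
    rw [hb₀li'.span_extend_eq_span hb₀W₂, Submodule.span_eq]
  set b₂ := hb₀li'.extend hb₀W₂ with hb₂def
  -- the third piece
  have hP₃sub : b₂ \ b₀ ⊆ b₂ := Set.diff_subset
  have hP₃li : LinearIndependent F (fun x : ↥(b₂ \ b₀) => (x : V)) :=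
    LinearIndepOn.mono (v := id) hb₂li hP₃sub
  -- disjointness of spans of b₀ and b₂ \ b₀
  have hdisj03 : Disjoint (span F b₀) (span F (b₂ \ b₀)) := by
    have hpre : Disjoint (Subtype.val ⁻¹' b₀ : Set ↥b₂) (Subtype.val ⁻¹' (b₂ \ b₀)) :=
      (Set.disjoint_sdiff_right).preimage _
    have h := hb₂li.disjoint_span_image hpre
    have h1 : (Subtype.val : ↥b₂ → V) '' (Subtype.val ⁻¹' b₀) = b₀ := by
      rw [Subtype.image_preimage_coe]
      exact Set.inter_eq_right.mpr hb₀b₂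
    have h2 : (Subtype.val : ↥b₂ → V) '' (Subtype.val ⁻¹' (b₂ \ b₀)) = b₂ \ b₀ := by
      rw [Subtype.image_preimage_coe]
      exact Set.inter_eq_right.mpr hP₃sub
    rwa [h1, h2] at h
  have hdisjW₁P₃ : Disjoint W₁ (span F (b₂ \ b₀)) := by
    rw [disjoint_def]
    intro z hz1 hz3
    have hz2 : z ∈ W₂ := by
      have hle : span F (b₂ \ b₀) ≤ W₂ := by
        rw [← hb₂span]; exact span_mono hP₃sub
      exact hle hz3
    have hz0 : z ∈ span F b₀ := by
      rw [hb₀span]; exact Submodule.mem_inf.mpr ⟨hz1, hz2⟩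
    exact disjoint_def.mp hdisj03 z hz0 hz3
  -- union of b₁ and b₂ \ b₀
  have hs₁₂li : LinearIndependent F (fun x : ↥(b₁ ∪ (b₂ \ b₀)) => (x : V)) :=
    LinearIndepOn.id_union hb₁li hP₃li (by rw [hb₁span]; exact hdisjW₁P₃)
  have hs₁₂li' : LinearIndepOn F id (b₁ ∪ (b₂ \ b₀)) := hs₁₂li
  -- extend to all of V
  have hs₁₂B : b₁ ∪ (b₂ \ b₀) ⊆ hs₁₂li'.extend (Set.subset_univ _) := hs₁₂li'.subset_extend _
  have hBli : LinearIndependent F (fun x : ↥(hs₁₂li'.extend (Set.subset_univ (b₁ ∪ (b₂ \ b₀)))) => (x : V)) :=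
    hs₁₂li'.linearIndepOn_extend (Set.subset_univ (b₁ ∪ (b₂ \ b₀)))
  have hBspan : span F (hs₁₂li'.extend (Set.subset_univ _)) = ⊤ :=
    eq_top_iff.mpr fun z _ => hs₁₂li'.subset_span_extend (Set.subset_univ _) (Set.mem_univ z)
  set B := hs₁₂li'.extend (Set.subset_univ _) with hBdef
  -- finiteness
  have hBfin : B.Finite := hBli.setFinite
  have hb₁fin : b₁.Finite := hBfin.subset fun z hz => hs₁₂B (Set.mem_union_left _ hz)
  have hP₃fin : (b₂ \ b₀).Finite := hBfin.subset fun z hz => hs₁₂B (Set.mem_union_right _ hz)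
  have hb₀fin : b₀.Finite := hb₁fin.subset hb₀b₁
  have hb₂fin : b₂.Finite := by
    have : b₂ = b₀ ∪ (b₂ \ b₀) := (Set.union_diff_cancel hb₀b₂).symm
    rw [this]; exact hb₀fin.union hP₃fin
  -- cardinalities
  have hb₀card : b₀.ncard = l := by rw [ncard_li hb₀li, hb₀span, hl]
  have hb₁card : b₁.ncard = k := by rw [ncard_li hb₁li, hb₁span, h1]
  have hb₂card : b₂.ncard = k := by rw [ncard_li hb₂li, hb₂span, h2]
  have hBcard : B.ncard = finrank F V := by rw [ncard_li hBli, hBspan, finrank_top]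
  have hlk : l ≤ k := by
    have := Submodule.finrank_mono (inf_le_left : W₁ ⊓ W₂ ≤ W₁)
    omega
  have hP₂card : (b₁ \ b₀).ncard = k - l := by
    rw [Set.ncard_diff hb₀b₁ hb₀fin, hb₁card, hb₀card]
  have hP₃card : (b₂ \ b₀).ncard = k - l := by
    rw [Set.ncard_diff hb₀b₂ hb₀fin, hb₂card, hb₀card]
  -- disjointness of b₁ and b₂ \ b₀ as sets
  have hdisj_b₁P₃ : Disjoint b₁ (b₂ \ b₀) := by
    rw [Set.disjoint_left]
    intro z hz1 hz3
    have hz0 : z ∈ span F b₀ := by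
      rw [hb₀span]
      exact Submodule.mem_inf.mpr ⟨hb₁W₁ hz1, hb₂W₂ hz3.1⟩
    have hzsp : z ∈ span F (b₂ \ b₀) := Submodule.subset_span hz3
    have hzz : z = 0 := disjoint_def.mp hdisj03 z hz0 hzsp
    exact hP₃li.ne_zero ⟨z, hz3⟩ hzz
  have hs₁₂card : (b₁ ∪ (b₂ \ b₀)).ncard = k + (k - l) := by
    rw [Set.ncard_union_eq hdisj_b₁P₃ hb₁fin hP₃fin, hb₁card, hP₃card]
  have hP₄card : (B \ (b₁ ∪ (b₂ \ b₀))).ncard = finrank F V - (2 * k - l) := by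
    rw [Set.ncard_diff hs₁₂B (hb₁fin.union hP₃fin), hBcard, hs₁₂card]
    omega
  -- enumerations
  obtain ⟨v, hvinj, hvrange⟩ := exists_enum b₀ l hb₀fin hb₀card
  obtain ⟨w, hwinj, hwrange⟩ := exists_enum (b₁ \ b₀) (k - l) hb₁fin.sdiff hP₂card
  obtain ⟨x, hxinj, hxrange⟩ := exists_enum (b₂ \ b₀) (k - l) hP₃fin hP₃card
  obtain ⟨y, hyinj, hyrange⟩ := exists_enum (B \ (b₁ ∪ (b₂ \ b₀)))
    (finrank F V - (2 * k - l)) hBfin.sdiff hP₄card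
  set c : ((Fin l ⊕ Fin (k - l)) ⊕ (Fin (k - l) ⊕ Fin (finrank F V - (2 * k - l)))) → V :=
    Sum.elim (Sum.elim v w) (Sum.elim x y) with hcdef
  -- injectivity of c
  have hdisj_vw : Disjoint b₀ (b₁ \ b₀) := Set.disjoint_sdiff_right
  have hdisj_xy : Disjoint (b₂ \ b₀) (B \ (b₁ ∪ (b₂ \ b₀))) := by
    rw [Set.disjoint_left]
    exact fun z hz hz' => hz'.2 (Set.mem_union_right _ hz)
  have hdisj_b₁P₄ : Disjoint b₁ (B \ (b₁ ∪ (b₂ \ b₀))) := by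
    rw [Set.disjoint_left]
    exact fun z hz hz' => hz'.2 (Set.mem_union_left _ hz)
  have hc_inj : Function.Injective c := by
    apply Function.Injective.sumElim
      (Function.Injective.sumElim hvinj hwinj ?_)
      (Function.Injective.sumElim hxinj hyinj ?_) ?_
    · intro a b hab
      exact Set.disjoint_left.mp hdisj_vw (hvrange ▸ Set.mem_range_self a)
        (hab ▸ (hwrange ▸ Set.mem_range_self b))
    · intro a b hab
      exact Set.disjoint_left.mp hdisj_xy (hxrange ▸ Set.mem_range_self a)
        (hab ▸ (hyrange ▸ Set.mem_range_self b))
    · intro a b hab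
      have ha : Sum.elim v w a ∈ b₁ := by
        have : Sum.elim v w a ∈ Set.range (Sum.elim v w) := Set.mem_range_self a
        rw [Sum.elim_range, hvrange, hwrange, Set.union_diff_cancel hb₀b₁] at this
        exact this
      have hb : Sum.elim x y b ∈ (b₂ \ b₀) ∪ (B \ (b₁ ∪ (b₂ \ b₀))) := by
        have : Sum.elim x y b ∈ Set.range (Sum.elim x y) := Set.mem_range_self b
        rw [Sum.elim_range, hxrange, hyrange] at this
        exact this
      rw [hab] at ha
      rcases hb with hb | hb
      · exact Set.disjoint_left.mp hdisj_b₁P₃ ha hb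
      · exact Set.disjoint_left.mp hdisj_b₁P₄ ha hb
  -- range of c
  have hc_range : Set.range c = B := by
    rw [hcdef, Sum.elim_range, Sum.elim_range, Sum.elim_range, hvrange, hwrange, hxrange,
      hyrange, Set.union_diff_cancel hb₀b₁, ← Set.union_assoc, Set.union_diff_cancel hs₁₂B]
  -- linear independence of c
  have hc_li : LinearIndependent F c := by
    have hmem : ∀ i, c i ∈ B := fun i => by rw [← hc_range]; exact Set.mem_range_self i
    exact hBli.comp (fun i => (⟨c i, hmem i⟩ : ↥B))
      (fun a b hab => hc_inj (congrArg Subtype.val hab))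
  have hc_span : ⊤ ≤ span F (Set.range c) := by rw [hc_range]; exact hBspan.ge
  refine ⟨Basis.mk hc_li hc_span, ?_, ?_⟩
  · have heq : (fun p : Fin l ⊕ Fin (k - l) => (Basis.mk hc_li hc_span) (Sum.inl p)) =
        Sum.elim v w := by
      funext p
      rw [Basis.mk_apply]
      cases p <;> rfl
    rw [heq, Sum.elim_range, hvrange, hwrange, Set.union_diff_cancel hb₀b₁, hb₁span]
  · have heq : (Sum.elim (fun i : Fin l => (Basis.mk hc_li hc_span) (Sum.inl (Sum.inl i)))
        (fun j : Fin (k - l) => (Basis.mk hc_li hc_span) (Sum.inr (Sum.inl j)))) =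
        Sum.elim v x := by
      funext p
      cases p <;> simp [Basis.mk_apply, hcdef]
    rw [heq, Sum.elim_range, hvrange, hxrange, Set.union_diff_cancel hb₀b₂, hb₂span]

private lemma card_le_aux [Fintype F] [FiniteDimensional F V] (φ : V ≃ₗ[F] V)
    {W₁ W₂ W₁' W₂' : Submodule F V}
    (hm1 : W₁.map (φ : V →ₗ[F] V) = W₁') (hm2 : W₂.map (φ : V →ₗ[F] V) = W₂') :
    Nat.card {T : W₁ →ₗ[F] V // IsSimple W₁ T ∧ LinearMap.range T = W₂} ≤
      Nat.card {T : W₁' →ₗ[F] V // IsSimple W₁' T ∧ LinearMap.range T = W₂'} := by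
  have hVfin : Finite V := Module.finite_of_finite F
  have hφi : Function.Injective ⇑(φ : V →ₗ[F] V) := φ.injective
  have hφs : Function.Surjective ⇑(φ : V →ₗ[F] V) := φ.surjective
  have hfin : Finite (W₁' →ₗ[F] V) := Finite.of_injective _ DFunLike.coe_injective
  let ψ : W₁ ≃ₗ[F] W₁' := (φ.submoduleMap W₁).trans (LinearEquiv.ofEq _ _ hm1)
  have hψ : ∀ z : W₁, (ψ z : V) = φ (z : V) := fun z => rfl
  let conj : (W₁ →ₗ[F] V) → (W₁' →ₗ[F] V) := fun T =>
    (φ : V →ₗ[F] V) ∘ₗ (T ∘ₗ (ψ.symm : W₁' →ₗ[F] W₁))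
  have hconj_apply : ∀ (T : W₁ →ₗ[F] V) (z : W₁'), conj T z = φ (T (ψ.symm z)) :=
    fun _ _ => rfl
  have himage : ∀ T : W₁ →ₗ[F] V, LinearMap.range T = W₂ →
      LinearMap.range (conj T) = W₂' := by
    intro T hT
    have h1 : LinearMap.range (T ∘ₗ (ψ.symm : W₁' →ₗ[F] W₁)) = LinearMap.range T :=
      LinearMap.range_comp_of_range_eq_top T (LinearEquiv.range ψ.symm)
    show LinearMap.range ((φ : V →ₗ[F] V) ∘ₗ (T ∘ₗ (ψ.symm : W₁' →ₗ[F] W₁))) = W₂'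
    rw [LinearMap.range_comp, h1, hT, hm2]
  have hsimple : ∀ T : W₁ →ₗ[F] V, IsSimple W₁ T → IsSimple W₁' (conj T) := by
    intro T hT U' hU'le hU'inv hU'top
    have hUle : U'.comap (φ : V →ₗ[F] V) ≤ W₁ := by
      calc U'.comap (φ : V →ₗ[F] V) ≤ (W₁.map (φ : V →ₗ[F] V)).comap (φ : V →ₗ[F] V) :=
            Submodule.comap_mono (hm1 ▸ hU'le)
        _ = W₁ := Submodule.comap_map_eq_of_injective hφi W₁
    have hUinv : ∀ z : W₁, (z : V) ∈ U'.comap (φ : V →ₗ[F] V) →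
        T z ∈ U'.comap (φ : V →ₗ[F] V) := by
      intro z hz
      have hmem : ((ψ z : W₁') : V) ∈ U' := by rw [hψ]; exact hz
      have h2 := hU'inv (ψ z) hmem
      rw [hconj_apply, ψ.symm_apply_apply] at h2
      exact h2
    have hUtop : U'.comap (φ : V →ₗ[F] V) ≠ ⊤ := by
      intro h
      apply hU'top
      have := congrArg (Submodule.map (φ : V →ₗ[F] V)) h
      rwa [Submodule.map_comap_eq_of_surjective hφs, Submodule.map_top,
        LinearMap.range_eq_top.mpr hφs] at this
    have hbot := hT _ hUle hUinv hUtop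
    have := congrArg (Submodule.map (φ : V →ₗ[F] V)) hbot
    rwa [Submodule.map_comap_eq_of_surjective hφs, Submodule.map_bot] at this
  have hinj : Function.Injective conj := by
    intro T₁ T₂ h
    ext z
    have h2 := congrArg (fun S : W₁' →ₗ[F] V => S (ψ z)) h
    simp only [hconj_apply, ψ.symm_apply_apply] at h2
    exact φ.injective h2
  exact Nat.card_le_card_of_injective
    (fun T => ⟨conj T.1, hsimple _ T.2.1, himage _ T.2.2⟩)
    (fun a b hab => Subtype.ext (hinj (congrArg Subtype.val hab)))

end Aux

theorem card_simple_maps_with_image_depends_only_on_dims {F V : Type*} [Field F] [Fintype F]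
    [AddCommGroup V] [Module F V] [FiniteDimensional F V]
    (k l : ℕ) (W₁ W₂ W₁' W₂' : Submodule F V)
    (h1 : Module.finrank F W₁ = k) (h2 : Module.finrank F W₂ = k)
    (h1' : Module.finrank F W₁' = k) (h2' : Module.finrank F W₂' = k)
    (hl : Module.finrank F ↥(W₁ ⊓ W₂) = l) (hl' : Module.finrank F ↥(W₁' ⊓ W₂') = l) :
    Nat.card {T : W₁ →ₗ[F] V // IsSimple W₁ T ∧ LinearMap.range T = W₂} =
      Nat.card {T : W₁' →ₗ[F] V // IsSimple W₁' T ∧ LinearMap.range T = W₂'} := by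
  obtain ⟨b, hb1, hb2⟩ := exists_adapted_basis k l W₁ W₂ h1 h2 hl
  obtain ⟨b', hb1', hb2'⟩ := exists_adapted_basis k l W₁' W₂' h1' h2' hl'
  let φ : V ≃ₗ[F] V := b.equiv b' (Equiv.refl _)
  have hφ : ∀ i, φ (b i) = b' i := fun i => b.equiv_apply i b' (Equiv.refl _)
  have hm1 : W₁.map (φ : V →ₗ[F] V) = W₁' := by
    rw [← hb1, ← hb1', Submodule.map_span, ← Set.range_comp]
    exact congrArg (span F) (congrArg Set.range (funext fun p => hφ _))
  have hm2 : W₂.map (φ : V →ₗ[F] V) = W₂' := by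
    rw [← hb2, ← hb2', Submodule.map_span, ← Set.range_comp]
    refine congrArg (span F) (congrArg Set.range (funext fun p => ?_))
    cases p <;> simp [hφ]
  have hφi : Function.Injective ⇑(φ : V →ₗ[F] V) := φ.injective
  have hm1' : W₁'.map (φ.symm : V →ₗ[F] V) = W₁ := by
    rw [Submodule.map_equiv_eq_comap_symm, LinearEquiv.symm_symm, ← hm1,
      Submodule.comap_map_eq_of_injective hφi]
  have hm2' : W₂'.map (φ.symm : V →ₗ[F] V) = W₂ := by
    rw [Submodule.map_equiv_eq_comap_symm, LinearEquiv.symm_symm, ← hm2,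
      Submodule.comap_map_eq_of_injective hφi]
  exact le_antisymm (card_le_aux φ hm1 hm2) (card_le_aux φ.symm hm1' hm2')
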